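/- arXiv:1604.01628 — 3 statements merged into one kernel-verified Lean document; each statement's English description precedes it below -/
import Mathlib

section
/- For every $x\in\mathbb{R}$, $s>0$, $\varepsilon>0$ and $\gamma>0$ with $\varepsilon\sqrt{s}\le\gamma$, and every $\sigma$-finite measure $\nu$ on $\mathbb{R}$ with $N(\nu,\gamma):=\sup_x \nu([x-\gamma,x+\gamma])<\infty$, one has $\int_0^s \int_{\mathbb{R}} \frac{1}{\sqrt{2\pi v \varepsilon^2}} e^{-\frac{(y-x)^2}{2v\varepsilon^2}}\,\nu(dy)\,dv \le \sqrt{c_0}\, N(\nu,\gamma)\, \sqrt{\frac{s}{\varepsilon^2}}$, where $c_0 = \frac{2}{\pi}\left(1+2\sum_{k=1}^\infty e^{-(2k-1)^2/2}\right)^2$. -/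
open MeasureTheory Real

noncomputable def c0 : ℝ :=
  (2 / Real.pi) * (1 + 2 * ∑' k : ℕ, Real.exp (-(2 * ((k : ℝ) + 1) - 1) ^ 2 / 2)) ^ 2

/-- The series `S = 1 + 2 ∑ exp(-(2k-1)²/2)`. -/
noncomputable def mS : ℝ := 1 + 2 * ∑' k : ℕ, Real.exp (-(2 * ((k : ℝ) + 1) - 1) ^ 2 / 2)

lemma my_summable_aux : Summable (fun k : ℕ => Real.exp (-(2 * ((k : ℝ) + 1) - 1) ^ 2 / 2)) := by
  apply Summable.of_nonneg_of_le (fun k => (Real.exp_pos _).le) (fun k => ?_)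
    (summable_geometric_of_lt_one (Real.exp_pos (-1)).le
      (Real.exp_lt_one_iff.2 (by norm_num)))
  rw [← Real.exp_nat_mul]
  apply Real.exp_le_exp.2
  have hk : (0:ℝ) ≤ (k : ℝ) := Nat.cast_nonneg k
  nlinarith

lemma my_tsum_nonneg : 0 ≤ ∑' k : ℕ, Real.exp (-(2 * ((k : ℝ) + 1) - 1) ^ 2 / 2) :=
  tsum_nonneg fun k => (Real.exp_pos _).le

lemma mS_nonneg : 0 ≤ mS := by
  have := my_tsum_nonneg; unfold mS; linarith

/-- The bound on each interval, indexed by `ℤ`. -/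
noncomputable def mb : ℤ → ℝ := fun k =>
  if k = 0 then 1 else Real.exp (-(2 * (k.natAbs : ℝ) - 1) ^ 2 / 2)

lemma mb_nonneg (k : ℤ) : 0 ≤ mb k := by
  unfold mb; split <;> [norm_num; exact (Real.exp_pos _).le]

lemma my_tsum_mb : ∑' k : ℤ, ENNReal.ofReal (mb k) = ENNReal.ofReal mS := by
  rw [tsum_of_nat_of_neg_add_one ENNReal.summable ENNReal.summable]
  have h1 : ∀ n : ℕ, mb (-((n : ℤ) + 1)) =
      Real.exp (-(2 * ((n : ℝ) + 1) - 1) ^ 2 / 2) := by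
    intro n
    have hne : (-((n : ℤ) + 1)) ≠ 0 := by omega
    have habs : ((-((n : ℤ) + 1)).natAbs : ℝ) = (n : ℝ) + 1 := by
      have : (-((n : ℤ) + 1)).natAbs = n + 1 := by omega
      rw [this]; push_cast; ring
    simp only [mb, hne, if_false, habs]
  have h2 : ∀ n : ℕ, mb ((n : ℤ) + 1) =
      Real.exp (-(2 * ((n : ℝ) + 1) - 1) ^ 2 / 2) := by
    intro n
    have hne : ((n : ℤ) + 1) ≠ 0 := by omega
    have habs : (((n : ℤ) + 1).natAbs : ℝ) = (n : ℝ) + 1 := by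
      have : ((n : ℤ) + 1).natAbs = n + 1 := by omega
      rw [this]; push_cast; ring
    simp only [mb, hne, if_false, habs]
  rw [tsum_eq_zero_add' (f := fun n : ℕ => ENNReal.ofReal (mb ((n : ℤ)))) ENNReal.summable]
  have e0 : mb ((0 : ℕ) : ℤ) = 1 := by simp [mb]
  have hT : ∀ n : ℕ, ENNReal.ofReal (mb (((n : ℕ) + 1 : ℕ) : ℤ)) =
      ENNReal.ofReal (Real.exp (-(2 * ((n : ℝ) + 1) - 1) ^ 2 / 2)) := by
    intro n
    congr 1
    have : (((n + 1 : ℕ)) : ℤ) = (n : ℤ) + 1 := by push_cast; ring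
    rw [this, h2]
  have hsum1 : ∑' n : ℕ, ENNReal.ofReal (mb (((n : ℕ) + 1 : ℕ) : ℤ)) =
      ENNReal.ofReal (∑' k : ℕ, Real.exp (-(2 * ((k : ℝ) + 1) - 1) ^ 2 / 2)) := by
    rw [ENNReal.ofReal_tsum_of_nonneg (fun k => (Real.exp_pos _).le) my_summable_aux]
    exact tsum_congr hT
  have hsum2 : ∑' n : ℕ, ENNReal.ofReal (mb (-((n : ℤ) + 1))) =
      ENNReal.ofReal (∑' k : ℕ, Real.exp (-(2 * ((k : ℝ) + 1) - 1) ^ 2 / 2)) := by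
    rw [ENNReal.ofReal_tsum_of_nonneg (fun k => (Real.exp_pos _).le) my_summable_aux]
    exact tsum_congr fun n => by rw [h1]
  rw [e0, hsum1, hsum2]
  unfold mS
  rw [ENNReal.ofReal_add (by norm_num) (mul_nonneg (by norm_num) my_tsum_nonneg),
    ENNReal.ofReal_mul (by norm_num)]
  rw [ENNReal.ofReal_one, ENNReal.ofReal_ofNat, two_mul]
  ring

/-- Every real is within `γ` of some point `x + 2kγ`. -/
lemma my_cover (x γ : ℝ) (hγ : 0 < γ) (y : ℝ) :
    ∃ k : ℤ, y ∈ Set.Icc (x + 2 * (k : ℝ) * γ - γ) (x + 2 * (k : ℝ) * γ + γ) := by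
  refine ⟨round ((y - x) / (2 * γ)), ?_⟩
  have h := abs_sub_round ((y - x) / (2 * γ))
  rw [abs_le] at h
  obtain ⟨h1, h2⟩ := h
  set k : ℤ := round ((y - x) / (2 * γ))
  have h2γ : (0:ℝ) < 2 * γ := by linarith
  have he : y - x - 2 * (k : ℝ) * γ = ((y - x) / (2 * γ) - (k : ℝ)) * (2 * γ) := by
    field_simp
  constructor
  · have := mul_le_mul_of_nonneg_right h1 h2γ.le
    rw [← he] at this
    nlinarith
  · have := mul_le_mul_of_nonneg_right h2 h2γ.le
    rw [← he] at this
    nlinarith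

lemma my_inner_bound (x γ v ε : ℝ) (hv : 0 < v) (hε : 0 < ε) (hγ : 0 < γ)
    (htγ : v * ε ^ 2 ≤ γ ^ 2) (ν : Measure ℝ) (Nb : ℝ) (hNb : 0 ≤ Nb)
    (hN : ∀ z : ℝ, ν (Set.Icc (z - γ) (z + γ)) ≤ ENNReal.ofReal Nb) :
    ∫⁻ y, ENNReal.ofReal ((1 / Real.sqrt (2 * Real.pi * v * ε ^ 2)) *
        Real.exp (-(y - x) ^ 2 / (2 * v * ε ^ 2))) ∂ν ≤
      ENNReal.ofReal ((1 / Real.sqrt (2 * Real.pi * v * ε ^ 2)) * (Nb * mS)) := by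
  set C : ℝ := 1 / Real.sqrt (2 * Real.pi * v * ε ^ 2) with hCdef
  have hC : 0 ≤ C := by positivity
  set I : ℤ → Set ℝ := fun k =>
    Set.Icc (x + 2 * (k : ℝ) * γ - γ) (x + 2 * (k : ℝ) * γ + γ) with hIdef
  have hpt : ∀ k : ℤ, ∀ y ∈ I k,
      Real.exp (-(y - x) ^ 2 / (2 * v * ε ^ 2)) ≤ mb k := by
    intro k y hy
    obtain ⟨hy1, hy2⟩ := hy
    by_cases hk : k = 0
    · subst hk
      simp only [mb, if_true]
      apply Real.exp_le_one_iff.2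
      apply div_nonpos_of_nonpos_of_nonneg (neg_nonpos.2 (sq_nonneg _)) (by positivity)
    · simp only [mb, hk, if_false]
      apply Real.exp_le_exp.2
      set a : ℝ := (k.natAbs : ℝ) with hadef
      have ha1 : 1 ≤ a := by
        have h : 1 ≤ k.natAbs := by omega
        rw [hadef]
        exact_mod_cast h
      have hyx : ((2 * a - 1) * γ) ^ 2 ≤ (y - x) ^ 2 := by
        have hlow : (2 * a - 1) * γ ≤ |y - x| := by
          rcases lt_or_gt_of_ne hk with hneg | hpos
          · have hak : a = -(k : ℝ) := by
              have h : (k.natAbs : ℤ) = -k := by omega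
              have h2 := congrArg (fun z : ℤ => (z : ℝ)) h
              push_cast at h2
              rw [hadef, Nat.cast_natAbs, Int.cast_abs]; exact h2
            have : (2 * a - 1) * γ ≤ -(y - x) := by
              rw [hak] at *
              nlinarith
            exact this.trans (neg_le_abs _)
          · have hak : a = (k : ℝ) := by
              have h : (k.natAbs : ℤ) = k := by omega
              have h2 := congrArg (fun z : ℤ => (z : ℝ)) h
              push_cast at h2
              rw [hadef, Nat.cast_natAbs, Int.cast_abs]; exact h2
            have : (2 * a - 1) * γ ≤ y - x := by
              rw [hak] at *; nlinarith
            exact this.trans (le_abs_self _)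
        have h0 : 0 ≤ (2 * a - 1) * γ := by nlinarith
        calc ((2 * a - 1) * γ) ^ 2 ≤ |y - x| ^ 2 := by
              apply pow_le_pow_left₀ h0 hlow
          _ = (y - x) ^ 2 := sq_abs _
      rw [neg_div, neg_div, neg_le_neg_iff]
      rw [div_le_div_iff₀ (by norm_num) (by positivity)]
      nlinarith [sq_nonneg (2 * a - 1)]
  calc
    ∫⁻ y, ENNReal.ofReal (C * Real.exp (-(y - x) ^ 2 / (2 * v * ε ^ 2))) ∂ν
        = ∫⁻ y in Set.univ, ENNReal.ofReal
            (C * Real.exp (-(y - x) ^ 2 / (2 * v * ε ^ 2))) ∂ν :=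
      (setLIntegral_univ _).symm
    _ ≤ ∫⁻ y in ⋃ k : ℤ, I k, ENNReal.ofReal
            (C * Real.exp (-(y - x) ^ 2 / (2 * v * ε ^ 2))) ∂ν := by
      apply lintegral_mono_set
      intro y _
      exact Set.mem_iUnion.2 (my_cover x γ hγ y)
    _ ≤ ∑' k : ℤ, ∫⁻ y in I k, ENNReal.ofReal
            (C * Real.exp (-(y - x) ^ 2 / (2 * v * ε ^ 2))) ∂ν :=
      lintegral_iUnion_le _ _
    _ ≤ ∑' k : ℤ, ENNReal.ofReal (C * mb k) * ENNReal.ofReal Nb := by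
      apply ENNReal.tsum_le_tsum
      intro k
      calc
        ∫⁻ y in I k, ENNReal.ofReal
            (C * Real.exp (-(y - x) ^ 2 / (2 * v * ε ^ 2))) ∂ν
            ≤ ∫⁻ _ in I k, ENNReal.ofReal (C * mb k) ∂ν := by
          apply setLIntegral_mono measurable_const
          intro y hy
          exact ENNReal.ofReal_le_ofReal
            (mul_le_mul_of_nonneg_left (hpt k y hy) hC)
        _ = ENNReal.ofReal (C * mb k) * ν (I k) := setLIntegral_const _ _
        _ ≤ ENNReal.ofReal (C * mb k) * ENNReal.ofReal Nb :=
          mul_le_mul_right (hN (x + 2 * (k : ℝ) * γ)) _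
    _ = (ENNReal.ofReal C * ENNReal.ofReal Nb) * ∑' k : ℤ, ENNReal.ofReal (mb k) := by
      rw [← ENNReal.tsum_mul_left]
      apply tsum_congr
      intro k
      rw [ENNReal.ofReal_mul hC]
      ring
    _ = ENNReal.ofReal (C * (Nb * mS)) := by
      rw [my_tsum_mb, ENNReal.ofReal_mul hC, ENNReal.ofReal_mul hNb, mul_assoc]

lemma my_sqrt_c0 : Real.sqrt c0 = Real.sqrt (2 / Real.pi) * mS := by
  have : c0 = (2 / Real.pi) * mS ^ 2 := rfl
  rw [this, Real.sqrt_mul (by positivity), Real.sqrt_sq mS_nonneg]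

lemma my_main (x s ε γ : ℝ) (hs : 0 < s) (hε : 0 < ε) (hγ : 0 < γ)
    (hsmall : ε * Real.sqrt s ≤ γ)
    (ν : Measure ℝ) (Nb : ℝ) (hNb : 0 ≤ Nb)
    (hN : ∀ z : ℝ, ν (Set.Icc (z - γ) (z + γ)) ≤ ENNReal.ofReal Nb) :
    ∫⁻ v in Set.Ioc (0 : ℝ) s, ∫⁻ y,
        ENNReal.ofReal ((1 / Real.sqrt (2 * Real.pi * v * ε ^ 2)) *
          Real.exp (-(y - x) ^ 2 / (2 * v * ε ^ 2))) ∂ν ≤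
      ENNReal.ofReal (Real.sqrt c0 * Nb * Real.sqrt (s / ε ^ 2)) := by
  have hsε : ε ^ 2 * s ≤ γ ^ 2 := by
    have h1 : (ε * Real.sqrt s) ^ 2 ≤ γ ^ 2 :=
      pow_le_pow_left₀ (by positivity) hsmall 2
    have h2 : (ε * Real.sqrt s) ^ 2 = ε ^ 2 * s := by
      rw [mul_pow, Real.sq_sqrt hs.le]
    linarith
  set K : ℝ := Nb * mS with hKdef
  have hK : 0 ≤ K := mul_nonneg hNb mS_nonneg
  set A : ℝ := Real.sqrt (2 * Real.pi * ε ^ 2) with hAdef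
  have hA : 0 < A := Real.sqrt_pos.2 (by positivity)
  calc
    ∫⁻ v in Set.Ioc (0 : ℝ) s, ∫⁻ y,
        ENNReal.ofReal ((1 / Real.sqrt (2 * Real.pi * v * ε ^ 2)) *
          Real.exp (-(y - x) ^ 2 / (2 * v * ε ^ 2))) ∂ν
      ≤ ∫⁻ v in Set.Ioc (0 : ℝ) s,
          ENNReal.ofReal ((1 / Real.sqrt (2 * Real.pi * v * ε ^ 2)) * K) := by
      apply setLIntegral_mono
      · apply Measurable.ennreal_ofReal
        apply Measurable.mul _ measurable_const
        apply Measurable.div measurable_const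
        exact Real.continuous_sqrt.measurable.comp (by fun_prop)
      · intro v hv
        have hvε : v * ε ^ 2 ≤ γ ^ 2 := by
          have := hv.2
          nlinarith [sq_nonneg ε]
        exact my_inner_bound x γ v ε hv.1 hε hγ hvε ν Nb hNb hN
    _ = ∫⁻ v in Set.Ioc (0 : ℝ) s,
          ENNReal.ofReal ((K / A) * v ^ (-(1/2) : ℝ)) := by
      apply setLIntegral_congr_fun measurableSet_Ioc
      intro v hv
      beta_reduce
      congr 1
      have hv0 : 0 < v := hv.1
      have hsv : Real.sqrt (2 * Real.pi * v * ε ^ 2) = A * Real.sqrt v := by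
        rw [hAdef, ← Real.sqrt_mul (by positivity)]
        congr 1; ring
      rw [hsv, Real.rpow_neg hv0.le, ← Real.sqrt_eq_rpow]
      have h1 : Real.sqrt v ≠ 0 := by positivity
      field_simp
    _ = ENNReal.ofReal ((K / A) * (2 * Real.sqrt s)) := by
      rw [← ofReal_integral_eq_lintegral_ofReal]
      · congr 1
        rw [integral_const_mul]
        congr 1
        rw [← intervalIntegral.integral_of_le hs.le,
          integral_rpow (Or.inl (by norm_num))]
        rw [Real.zero_rpow (by norm_num)]
        rw [show (-(1/2) : ℝ) + 1 = 1/2 by norm_num]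
        rw [← Real.sqrt_eq_rpow]
        ring
      · apply Integrable.const_mul
        have := (intervalIntegral.intervalIntegrable_rpow'
          (a := 0) (b := s) (r := -(1/2)) (by norm_num))
        rw [intervalIntegrable_iff_integrableOn_Ioc_of_le hs.le] at this
        exact this
      · filter_upwards [ae_restrict_mem measurableSet_Ioc] with v hv
        have : (0:ℝ) < v := hv.1
        positivity
    _ = ENNReal.ofReal (Real.sqrt c0 * Nb * Real.sqrt (s / ε ^ 2)) := by
      congr 1
      rw [my_sqrt_c0]
      have hπ : 0 < Real.pi := Real.pi_pos
      have hA2 : A = Real.sqrt (2 * Real.pi) * ε := by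
        rw [hAdef, Real.sqrt_mul (by positivity), Real.sqrt_sq hε.le]
      have hs2 : Real.sqrt (s / ε ^ 2) = Real.sqrt s / ε := by
        rw [Real.sqrt_div hs.le, Real.sqrt_sq hε.le]
      have h4 : Real.sqrt (2 / Real.pi) * Real.sqrt (2 * Real.pi) = 2 := by
        rw [← Real.sqrt_mul (by positivity)]
        rw [show 2 / Real.pi * (2 * Real.pi) = 2 ^ 2 by field_simp]
        exact Real.sqrt_sq (by norm_num)
      have h2π : (0:ℝ) < Real.sqrt (2 * Real.pi) := Real.sqrt_pos.2 (by positivity)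
      have h5 : Real.sqrt (2 / Real.pi) = 2 / Real.sqrt (2 * Real.pi) := by
        field_simp at h4 ⊢
        linarith
      rw [hKdef, hA2, hs2, h5]
      field_simp

theorem stmt_6 (x s ε γ : ℝ) (hs : 0 < s) (hε : 0 < ε) (hγ : 0 < γ)
    (hsmall : ε * Real.sqrt s ≤ γ)
    (ν : Measure ℝ) [SigmaFinite ν] (Nb : ℝ)
    (hN : ∀ z : ℝ, ν (Set.Icc (z - γ) (z + γ)) ≤ ENNReal.ofReal Nb) :
    ∫⁻ v in Set.Ioc (0 : ℝ) s, ∫⁻ y,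
        ENNReal.ofReal ((1 / Real.sqrt (2 * Real.pi * v * ε ^ 2)) *
          Real.exp (-(y - x) ^ 2 / (2 * v * ε ^ 2))) ∂ν ≤
      ENNReal.ofReal (Real.sqrt c0 * Nb * Real.sqrt (s / ε ^ 2)) := by
  rcases le_or_gt 0 Nb with hNb | hNb
  · exact my_main x s ε γ hs hε hγ hsmall ν Nb hNb hN
  · have hN0 : ∀ z : ℝ, ν (Set.Icc (z - γ) (z + γ)) ≤ ENNReal.ofReal 0 := by
      intro z
      refine (hN z).trans ?_
      rw [ENNReal.ofReal_of_nonpos hNb.le]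
      exact bot_le
    have := my_main x s ε γ hs hε hγ hsmall ν 0 le_rfl hN0
    refine this.trans ?_
    simp
end

section
/- Let $\mu = \sum_{k=1}^{\infty} (\delta_{k^2} + \delta_{k^2 + 2^{-k}})$ on $\mathbb{R}$. Then $\sup_{x \in \mathbb{R}} \mu([x-1, x+1]) < \infty$ and $\sup_{y \in \mathbb{R}} \mu(\{y\}) = 1$, yet for every $\gamma > 0$, $\sup_{x \in \mathbb{R}} \mu([x - \gamma, x + \gamma]) \ge 2$. -/
open MeasureTheory ENNReal

noncomputable def pA (k : ℕ) : ℝ := ((k : ℝ) + 1) ^ 2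
noncomputable def qA (k : ℕ) : ℝ := ((k : ℝ) + 1) ^ 2 + (2 : ℝ) ^ (-((k : ℤ) + 1))

lemma q_gt (k : ℕ) : pA k < qA k := by
  have h : (0:ℝ) < (2:ℝ) ^ (-((k:ℤ)+1)) := zpow_pos (by norm_num) _
  unfold pA qA; linarith

lemma q_le (k : ℕ) : qA k ≤ pA k + 1/2 := by
  have h : (2:ℝ) ^ (-((k:ℤ)+1)) ≤ (2:ℝ) ^ (-1 : ℤ) := by
    apply zpow_le_zpow_right₀ (by norm_num) (by omega)
  have : ((2:ℝ):ℝ) ^ (-1:ℤ) = 1/2 := by norm_num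
  unfold pA qA; rw [this] at h; linarith

lemma spacing {k l : ℕ} (h : k < l) : pA k + 3 ≤ pA l := by
  have h1 : (k:ℝ) + 1 ≤ (l:ℝ) := by exact_mod_cast h
  have h0 : (0:ℝ) ≤ (k:ℝ) := Nat.cast_nonneg k
  unfold pA; nlinarith

lemma spacing' {k l : ℕ} (h : k ≠ l) : 3 ≤ |pA k - pA l| := by
  rcases lt_or_gt_of_ne h with h' | h'
  · have := spacing h'; rw [abs_sub_comm, abs_of_nonneg (by linarith)]; linarith
  · have := spacing h'; rw [abs_of_nonneg (by linarith)]; linarith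

lemma mu_apply (S : Set ℝ) (hS : MeasurableSet S) :
    (Measure.sum (fun k : ℕ =>
      Measure.dirac (((k : ℝ) + 1) ^ 2) +
      Measure.dirac (((k : ℝ) + 1) ^ 2 + (2 : ℝ) ^ (-((k : ℤ) + 1))))) S
    = ∑' k : ℕ, (S.indicator 1 (pA k) + S.indicator 1 (qA k)) := by
  rw [Measure.sum_apply _ hS]
  congr 1; funext k
  rw [Measure.add_apply, Measure.dirac_apply' _ hS, Measure.dirac_apply' _ hS]
  rfl

lemma ind_le_one (S : Set ℝ) (a : ℝ) : S.indicator (1 : ℝ → ℝ≥0∞) a ≤ 1 := by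
  by_cases h : a ∈ S <;> simp [h]

theorem stmt_18 (μ : Measure ℝ)
    (hμ : μ = Measure.sum (fun k : ℕ =>
      Measure.dirac (((k : ℝ) + 1) ^ 2) +
      Measure.dirac (((k : ℝ) + 1) ^ 2 + (2 : ℝ) ^ (-((k : ℤ) + 1))))) :
    (⨆ x : ℝ, μ (Set.Icc (x - 1) (x + 1))) < ⊤ ∧
    (⨆ y : ℝ, μ {y}) = 1 ∧
    ∀ γ : ℝ, 0 < γ → 2 ≤ ⨆ x : ℝ, μ (Set.Icc (x - γ) (x + γ)) := by
  subst hμ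
  refine ⟨?_, ?_, ?_⟩
  · -- bounded by 2
    refine lt_of_le_of_lt (iSup_le fun x => ?_) (by norm_num : (2:ℝ≥0∞) < ⊤)
    rw [mu_apply _ measurableSet_Icc]
    set S := Set.Icc (x - 1) (x + 1) with hSdef
    have window : ∀ k, (pA k ∈ S ∨ qA k ∈ S) → x - 3/2 ≤ pA k ∧ pA k ≤ x + 1 := by
      intro k hk
      have h1 := q_gt k; have h2 := q_le k
      rcases hk with ⟨ha, hb⟩ | ⟨ha, hb⟩ <;> constructor <;> linarith
    by_cases h : ∃ k, pA k ∈ S ∨ qA k ∈ S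
    · obtain ⟨k₀, hk₀⟩ := h
      rw [tsum_eq_single k₀ ?side]
      · exact le_trans (add_le_add (ind_le_one _ _) (ind_le_one _ _)) (by norm_num)
      case side =>
        intro b hb
        have hnb : ¬(pA b ∈ S ∨ qA b ∈ S) := by
          intro hmem
          have w1 := window _ hmem
          have w2 := window _ hk₀
          have := spacing' hb
          rcases abs_cases (pA b - pA k₀) with ⟨he, _⟩ | ⟨he, _⟩ <;> rw [he] at this <;> linarith
        push_neg at hnb
        rw [Set.indicator_of_notMem hnb.1, Set.indicator_of_notMem hnb.2, add_zero]
    · push_neg at h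
      have : ∀ k : ℕ, (S.indicator (1 : ℝ → ℝ≥0∞) (pA k) + S.indicator 1 (qA k)) = 0 := by
        intro k
        rw [Set.indicator_of_notMem (h k).1, Set.indicator_of_notMem (h k).2, add_zero]
      simp only [this, tsum_zero]
      norm_num
  · -- sup of atoms = 1
    apply le_antisymm
    · refine iSup_le fun y => ?_
      rw [mu_apply _ (measurableSet_singleton y)]
      set S : Set ℝ := {y} with hSdef
      have window : ∀ k, (pA k ∈ S ∨ qA k ∈ S) → y - 1/2 ≤ pA k ∧ pA k ≤ y := by
        intro k hk
        have h1 := q_gt k; have h2 := q_le k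
        rcases hk with ha | ha <;> rw [Set.mem_singleton_iff] at ha <;> constructor <;> linarith
      by_cases h : ∃ k, pA k ∈ S ∨ qA k ∈ S
      · obtain ⟨k₀, hk₀⟩ := h
        rw [tsum_eq_single k₀ ?side2]
        · -- term ≤ 1 : cannot have both
          by_cases hp : pA k₀ ∈ S
          · have hq : qA k₀ ∉ S := by
              rw [Set.mem_singleton_iff] at hp ⊢
              intro hq; have := q_gt k₀; rw [hp, hq] at this; exact lt_irrefl _ this
            rw [Set.indicator_of_mem hp, Set.indicator_of_notMem hq]; simp
          · rw [Set.indicator_of_notMem hp, zero_add]; exact ind_le_one _ _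
        case side2 =>
          intro b hb
          have hnb : ¬(pA b ∈ S ∨ qA b ∈ S) := by
            intro hmem
            have w1 := window _ hmem
            have w2 := window _ hk₀
            have := spacing' hb
            rcases abs_cases (pA b - pA k₀) with ⟨he, _⟩ | ⟨he, _⟩ <;> rw [he] at this <;> linarith
          push_neg at hnb
          rw [Set.indicator_of_notMem hnb.1, Set.indicator_of_notMem hnb.2, add_zero]
      · push_neg at h
        have : ∀ k : ℕ, (S.indicator (1 : ℝ → ℝ≥0∞) (pA k) + S.indicator 1 (qA k)) = 0 := by
          intro k
          rw [Set.indicator_of_notMem (h k).1, Set.indicator_of_notMem (h k).2, add_zero]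
        simp only [this, tsum_zero]
        norm_num
    · -- μ {1} = 1
      have h1 : (Measure.sum (fun k : ℕ =>
          Measure.dirac (((k : ℝ) + 1) ^ 2) +
          Measure.dirac (((k : ℝ) + 1) ^ 2 + (2 : ℝ) ^ (-((k : ℤ) + 1))))) {(1:ℝ)} = 1 := by
        rw [mu_apply _ (measurableSet_singleton 1)]
        rw [tsum_eq_single 0 ?side3]
        · have hp : pA 0 ∈ ({(1:ℝ)} : Set ℝ) := by
            simp [pA]
          have hq : qA 0 ∉ ({(1:ℝ)} : Set ℝ) := by
            simp only [qA, Set.mem_singleton_iff]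
            norm_num
          rw [Set.indicator_of_mem hp, Set.indicator_of_notMem hq]; simp
        case side3 =>
          intro b hb
          have hb1 : 1 ≤ b := Nat.one_le_iff_ne_zero.mpr hb
          have hbr : (2:ℝ) ≤ (b:ℝ) + 1 := by
            have : (1:ℝ) ≤ (b:ℝ) := by exact_mod_cast hb1
            linarith
          have hp4 : (4:ℝ) ≤ pA b := by unfold pA; nlinarith
          have hq4 : (4:ℝ) ≤ qA b := le_of_lt (lt_of_le_of_lt hp4 (q_gt b))
          have hp : pA b ∉ ({(1:ℝ)} : Set ℝ) := by
            simp only [Set.mem_singleton_iff]; intro h; rw [h] at hp4; linarith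
          have hq : qA b ∉ ({(1:ℝ)} : Set ℝ) := by
            simp only [Set.mem_singleton_iff]; intro h; rw [h] at hq4; linarith
          rw [Set.indicator_of_notMem hp, Set.indicator_of_notMem hq, add_zero]
      calc (1:ℝ≥0∞) = _ := h1.symm
        _ ≤ _ := le_iSup (fun y : ℝ => (Measure.sum (fun k : ℕ =>
          Measure.dirac (((k : ℝ) + 1) ^ 2) +
          Measure.dirac (((k : ℝ) + 1) ^ 2 + (2 : ℝ) ^ (-((k : ℤ) + 1))))) {y}) (1:ℝ)
  · -- part 3
    intro γ hγ
    obtain ⟨n, hn⟩ := exists_pow_lt_of_lt_one hγ (by norm_num : (1:ℝ)/2 < 1)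
    have hz : (2:ℝ) ^ (-((n:ℤ)+1)) ≤ γ := by
      have he : (2:ℝ) ^ (-((n:ℤ)+1)) = ((1:ℝ)/2) ^ (n+1) := by
        rw [one_div, inv_pow, ← zpow_natCast (2:ℝ) (n+1), ← zpow_neg]
        congr 1
      rw [he]
      calc ((1:ℝ)/2) ^ (n+1) ≤ ((1:ℝ)/2) ^ n := by
            apply pow_le_pow_of_le_one (by norm_num) (by norm_num) (by omega)
        _ ≤ γ := le_of_lt hn
    have key : (2:ℝ≥0∞) ≤ (Measure.sum (fun k : ℕ =>
          Measure.dirac (((k : ℝ) + 1) ^ 2) +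
          Measure.dirac (((k : ℝ) + 1) ^ 2 + (2 : ℝ) ^ (-((k : ℤ) + 1)))))
          (Set.Icc (pA n - γ) (pA n + γ)) := by
      rw [mu_apply _ measurableSet_Icc]
      have hp : pA n ∈ Set.Icc (pA n - γ) (pA n + γ) :=
        Set.mem_Icc.mpr ⟨by linarith, by linarith⟩
      have hq : qA n ∈ Set.Icc (pA n - γ) (pA n + γ) := by
        have h1 := q_gt n
        have h2 : qA n ≤ pA n + γ := by unfold qA pA at *; linarith
        exact Set.mem_Icc.mpr ⟨by linarith, h2⟩
      calc (2:ℝ≥0∞) = (Set.Icc (pA n - γ) (pA n + γ)).indicator (1 : ℝ → ℝ≥0∞) (pA n)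
              + (Set.Icc (pA n - γ) (pA n + γ)).indicator 1 (qA n) := by
            rw [Set.indicator_of_mem hp, Set.indicator_of_mem hq]; simp; exact (one_add_one_eq_two).symm
        _ ≤ _ := ENNReal.le_tsum n
    exact le_trans key (le_iSup (fun x : ℝ => (Measure.sum (fun k : ℕ =>
          Measure.dirac (((k : ℝ) + 1) ^ 2) +
          Measure.dirac (((k : ℝ) + 1) ^ 2 + (2 : ℝ) ^ (-((k : ℤ) + 1)))))
          (Set.Icc (x - γ) (x + γ))) (pA n))
end

section
/- Let $a > 0$, $t > 0$, and let $L^{(0)}_t(W)$ denote the local time at $0$ of a standard Brownian motion at time $t$, which has the same distribution as $|W_t|$. Then $\lim_{\varepsilon \to 0^+} \varepsilon^2 \log \mathbb{E}\, e^{a \varepsilon^{-1} |W_t|} = \frac{t a^2}{2}$. -/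
open MeasureTheory ProbabilityTheory Filter

lemma gauss_pdf_mul_exp (t : NNReal) (ht : t ≠ 0) (c x : ℝ) :
    Real.exp (c * x) * gaussianPDFReal 0 t x
      = Real.exp (c ^ 2 * t / 2) * gaussianPDFReal (c * t) t x := by
  have ht' : (0:ℝ) < (t:ℝ) := by positivity
  simp only [gaussianPDFReal]
  rw [mul_comm (Real.exp (c*x)), mul_assoc, ← Real.exp_add, mul_left_comm, ← Real.exp_add]
  congr 2
  field_simp
  ring

lemma gauss_exp_integrable (t : NNReal) (ht : t ≠ 0) (c : ℝ) :
    Integrable (fun x => Real.exp (c * x)) (gaussianReal 0 t) := by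
  rw [gaussianReal_of_var_ne_zero _ ht, gaussianPDF_def]
  simp_rw [ENNReal.ofReal]
  rw [integrable_withDensity_iff_integrable_smul
    ((measurable_gaussianPDFReal 0 t).real_toNNReal)]
  have : (fun x => (Real.toNNReal (gaussianPDFReal 0 t x)) • Real.exp (c * x))
      = fun x => Real.exp (c ^ 2 * t / 2) * gaussianPDFReal (c * t) t x := by
    ext x
    rw [NNReal.smul_def, smul_eq_mul, Real.coe_toNNReal _ (gaussianPDFReal_nonneg 0 t x),
      mul_comm, gauss_pdf_mul_exp t ht]
  rw [this]
  exact (integrable_gaussianPDFReal (c*t) t).const_mul _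

lemma gauss_exp_integral (t : NNReal) (ht : t ≠ 0) (c : ℝ) :
    ∫ x, Real.exp (c * x) ∂(gaussianReal 0 t) = Real.exp (c ^ 2 * t / 2) := by
  rw [gaussianReal_of_var_ne_zero _ ht, gaussianPDF_def]
  simp_rw [ENNReal.ofReal]
  rw [integral_withDensity_eq_integral_smul ((measurable_gaussianPDFReal 0 t).real_toNNReal)]
  have : (fun x => (Real.toNNReal (gaussianPDFReal 0 t x)) • Real.exp (c * x))
      = fun x => Real.exp (c ^ 2 * t / 2) * gaussianPDFReal (c * t) t x := by
    ext x
    rw [NNReal.smul_def, smul_eq_mul, Real.coe_toNNReal _ (gaussianPDFReal_nonneg 0 t x),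
      mul_comm, gauss_pdf_mul_exp t ht]
  rw [this, integral_const_mul, integral_gaussianPDFReal_eq_one (c*t) ht, mul_one]

theorem stmt_19 {Ω : Type*} [MeasurableSpace Ω] (μ : Measure Ω) [IsProbabilityMeasure μ]
    (a t : ℝ) (ha : 0 < a) (ht : 0 < t)
    (X : Ω → ℝ) (hXmeas : Measurable X)
    (hX : Measure.map X μ = gaussianReal 0 (Real.toNNReal t)) :
    Tendsto (fun ε : ℝ => ε ^ 2 * Real.log (∫ ω, Real.exp (a * ε⁻¹ * |X ω|) ∂μ))
      (nhdsWithin 0 (Set.Ioi 0)) (nhds (t * a ^ 2 / 2)) := by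
  set v : NNReal := Real.toNNReal t with hv
  have hv0 : v ≠ 0 := by
    simp [hv, Real.toNNReal_eq_zero, not_le, ht]
  have hvt : (v : ℝ) = t := Real.coe_toNNReal t ht.le
  -- key bounds for each ε > 0
  have key : ∀ ε : ℝ, ε ∈ Set.Ioi (0:ℝ) →
      t * a ^ 2 / 2 ≤ ε ^ 2 * Real.log (∫ ω, Real.exp (a * ε⁻¹ * |X ω|) ∂μ) ∧
      ε ^ 2 * Real.log (∫ ω, Real.exp (a * ε⁻¹ * |X ω|) ∂μ)
        ≤ t * a ^ 2 / 2 + ε ^ 2 * Real.log 2 := by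
    intro ε hε
    simp only [Set.mem_Ioi] at hε
    set c : ℝ := a * ε⁻¹ with hc
    have hcpos : 0 < c := mul_pos ha (inv_pos.mpr hε)
    have hint : ∀ d : ℝ, Integrable (fun ω => Real.exp (d * X ω)) μ := by
      intro d
      have h1 := gauss_exp_integrable v hv0 d
      rw [← hX] at h1
      exact (integrable_map_measure h1.aestronglyMeasurable hXmeas.aemeasurable).mp h1
    have hval : ∀ d : ℝ, ∫ ω, Real.exp (d * X ω) ∂μ = Real.exp (d ^ 2 * t / 2) := by
      intro d
      have h1 := gauss_exp_integral v hv0 d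
      rw [← hvt]
      have hsm : AEStronglyMeasurable (fun x : ℝ => Real.exp (d * x)) (Measure.map X μ) := by
        exact ((measurable_id.const_mul d).exp.aestronglyMeasurable)
      rw [← hX, integral_map hXmeas.aemeasurable hsm] at h1
      exact h1
    have habs : Integrable (fun ω => Real.exp (c * |X ω|)) μ := by
      refine ((hint c).add (hint (-c))).mono ?_ ?_
      · exact ((hXmeas.abs.const_mul c).exp).aestronglyMeasurable
      · filter_upwards with ω
        simp only [Pi.add_apply, Real.norm_eq_abs]
        rw [abs_of_nonneg (Real.exp_nonneg _), abs_of_nonneg (add_nonneg (Real.exp_nonneg _) (Real.exp_nonneg _))]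
        rcases abs_cases (X ω) with ⟨h1, _⟩ | ⟨h1, _⟩
        · rw [h1]
          linarith [Real.exp_nonneg (-c * X ω)]
        · rw [h1, mul_neg, ← neg_mul]
          linarith [Real.exp_nonneg (c * X ω)]
    have hlb : Real.exp (c ^ 2 * t / 2) ≤ ∫ ω, Real.exp (c * |X ω|) ∂μ := by
      rw [← hval c]
      refine integral_mono (hint c) habs fun ω => ?_
      exact Real.exp_le_exp.mpr (mul_le_mul_of_nonneg_left (le_abs_self _) hcpos.le)
    have hub : ∫ ω, Real.exp (c * |X ω|) ∂μ ≤ 2 * Real.exp (c ^ 2 * t / 2) := by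
      have h2 : ∫ ω, (Real.exp (c * X ω) + Real.exp (-c * X ω)) ∂μ
          = 2 * Real.exp (c ^ 2 * t / 2) := by
        rw [integral_add (hint c) (hint (-c)), hval c, hval (-c)]
        ring_nf
      rw [← h2]
      refine integral_mono habs ((hint c).add (hint (-c))) fun ω => ?_
      rcases abs_cases (X ω) with ⟨h1, _⟩ | ⟨h1, _⟩
      · rw [h1]; linarith [Real.exp_nonneg (-c * X ω)]
      · rw [h1, mul_neg, ← neg_mul]; linarith [Real.exp_nonneg (c * X ω)]
    have hpos : 0 < ∫ ω, Real.exp (c * |X ω|) ∂μ :=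
      lt_of_lt_of_le (Real.exp_pos _) hlb
    have hlog1 : c ^ 2 * t / 2 ≤ Real.log (∫ ω, Real.exp (c * |X ω|) ∂μ) := by
      calc c ^ 2 * t / 2 = Real.log (Real.exp (c ^ 2 * t / 2)) := (Real.log_exp _).symm
        _ ≤ _ := Real.log_le_log (Real.exp_pos _) hlb
    have hlog2 : Real.log (∫ ω, Real.exp (c * |X ω|) ∂μ) ≤ Real.log 2 + c ^ 2 * t / 2 := by
      calc Real.log (∫ ω, Real.exp (c * |X ω|) ∂μ)
          ≤ Real.log (2 * Real.exp (c ^ 2 * t / 2)) := Real.log_le_log hpos hub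
        _ = Real.log 2 + c ^ 2 * t / 2 := by
            rw [Real.log_mul two_ne_zero (Real.exp_ne_zero _), Real.log_exp]
    have hεsq : (0:ℝ) < ε ^ 2 := by positivity
    have hcc : ε ^ 2 * (c ^ 2 * t / 2) = t * a ^ 2 / 2 := by
      field_simp [hc]
      rw [hc, mul_pow, inv_pow, mul_left_comm, mul_inv_cancel₀ (pow_ne_zero 2 hε.ne'), mul_one]
    constructor
    · calc t * a ^ 2 / 2 = ε ^ 2 * (c ^ 2 * t / 2) := hcc.symm
        _ ≤ _ := mul_le_mul_of_nonneg_left hlog1 hεsq.le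
    · calc ε ^ 2 * Real.log (∫ ω, Real.exp (c * |X ω|) ∂μ)
          ≤ ε ^ 2 * (Real.log 2 + c ^ 2 * t / 2) :=
            mul_le_mul_of_nonneg_left hlog2 hεsq.le
        _ = t * a ^ 2 / 2 + ε ^ 2 * Real.log 2 := by rw [mul_add, hcc]; ring
  refine tendsto_of_tendsto_of_tendsto_of_le_of_le' tendsto_const_nhds ?_
    (eventually_nhdsWithin_of_forall fun ε hε => (key ε hε).1)
    (eventually_nhdsWithin_of_forall fun ε hε => (key ε hε).2)
  have : Tendsto (fun ε : ℝ => t * a ^ 2 / 2 + ε ^ 2 * Real.log 2) (nhds 0)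
      (nhds (t * a ^ 2 / 2 + 0 ^ 2 * Real.log 2)) := by
    exact (continuous_const.add ((continuous_pow 2).mul continuous_const)).tendsto 0
  simpa using this.mono_left nhdsWithin_le_nhds
end
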